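/- Let K ⊆ ℝ be a subfield and let w be a potential on an electrical network all of whose edge weights lie in K. Then w(x) ∈ K for every vertex x of the network. -/

import Mathlib

open scoped Classical

noncomputable section

/-- An electrical network: a finite directed multigraph with positive edge weights and two
distinguished vertices `N`, `P`, such that from every other vertex there is a directed path
to `N` and a directed path to `P`. -/
structure ElecNetwork (V E : Type) [Fintype V] [Fintype E] where
  src : E → V
  tgt : E → V
  weight : E → ℝ
  weight_pos : ∀ e, 0 < weight e
  N : V
  P : V
  conn_N : ∀ x : V, x ≠ N → x ≠ P →
    Relation.ReflTransGen (fun u v => ∃ e, src e = u ∧ tgt e = v) x N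
  conn_P : ∀ x : V, x ≠ N → x ≠ P →
    Relation.ReflTransGen (fun u v => ∃ e, src e = u ∧ tgt e = v) x P

/-- A potential on an electrical network: `w(N) = 1`, `w(P) = 0`, and for every other vertex
`x` the weighted sum `Σ weight(e)·(w(x) − w(tgt e))` over edges `e` with source `x` and
target `≠ x` vanishes. -/
def IsPotential {V E : Type} [Fintype V] [Fintype E] (G : ElecNetwork V E) (w : V → ℝ) :
    Prop :=
  w G.N = 1 ∧ w G.P = 0 ∧
  ∀ x : V, x ≠ G.N → x ≠ G.P →
    (∑ e : E, if G.src e = x ∧ G.tgt e ≠ x then G.weight e * (w x - w (G.tgt e)) else 0) = 0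

/-- Maximum principle: a solution of the Kirchhoff system vanishing at `N` and `P`
is everywhere `≤ 0`. -/
lemma aux_max_le {V E : Type} [Fintype V] [Fintype E] (G : ElecNetwork V E)
    (d : V → ℝ) (hN : d G.N = 0) (hP : d G.P = 0)
    (hk : ∀ x : V, x ≠ G.N → x ≠ G.P →
      (∑ e : E, if G.src e = x ∧ G.tgt e ≠ x then G.weight e * (d x - d (G.tgt e)) else 0) = 0) :
    ∀ x : V, d x ≤ 0 := by
  obtain ⟨x0, -, hx0⟩ := Finset.exists_max_image (Finset.univ : Finset V) d ⟨G.N, Finset.mem_univ _⟩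
  set M := d x0 with hM
  have hmax : ∀ y : V, d y ≤ M := fun y => hx0 y (Finset.mem_univ y)
  -- propagation lemma
  have prop : ∀ x : V, Relation.ReflTransGen (fun u v => ∃ e, G.src e = u ∧ G.tgt e = v) x G.N →
      d x = M → ∃ z, (z = G.N ∨ z = G.P) ∧ d z = M := by
    intro x hpath
    induction hpath using Relation.ReflTransGen.head_induction_on with
    | refl => intro h; exact ⟨G.N, Or.inl rfl, h⟩
    | head h _ ih =>
      rename_i a c _
      intro hda
      by_cases haN : a = G.N
      · exact ⟨a, Or.inl haN, hda⟩
      by_cases haP : a = G.P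
      · exact ⟨a, Or.inr haP, hda⟩
      · obtain ⟨e, he1, he2⟩ := h
        by_cases hcx : c = a
        · exact ih (hcx ▸ hda)
        · -- each summand is nonneg, sum is zero: each is zero
          have hsum := hk a haN haP
          have hnonneg : ∀ e' ∈ (Finset.univ : Finset E), 0 ≤
              (if G.src e' = a ∧ G.tgt e' ≠ a then G.weight e' * (d a - d (G.tgt e')) else 0) := by
            intro e' _
            split
            · have := hmax (G.tgt e')
              have := (G.weight_pos e').le
              nlinarith [hmax (G.tgt e'), (G.weight_pos e').le, hda]
            · exact le_rfl
          have hzero := (Finset.sum_eq_zero_iff_of_nonneg hnonneg).mp hsum e (Finset.mem_univ e)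
          rw [if_pos ⟨he1, he2 ▸ hcx⟩] at hzero
          have : d (G.tgt e) = M := by
            have hwpos := G.weight_pos e
            have := mul_eq_zero.mp hzero
            rcases this with h' | h'
            · exact absurd h' (ne_of_gt hwpos)
            · linarith [hda]
          exact ih (he2 ▸ this)
  have hM0 : M = 0 := by
    by_cases hN' : x0 = G.N
    · rw [hM, hN', hN]
    by_cases hP' : x0 = G.P
    · rw [hM, hP', hP]
    · obtain ⟨z, hz, hzM⟩ := prop x0 (G.conn_N x0 hN' hP') rfl
      rcases hz with h | h
      · rw [h, hN] at hzM; exact hzM.symm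
      · rw [h, hP] at hzM; exact hzM.symm
  intro x; rw [← hM0]; exact hmax x

/-- **Rationality of the potential.** If all edge weights of an electrical network lie in a
subfield `K ⊆ ℝ`, then every value of a potential on the network lies in `K`. -/
theorem statement13 {V E : Type} [Fintype V] [Fintype E] (G : ElecNetwork V E)
    (K : Subfield ℝ) (hK : ∀ e : E, G.weight e ∈ K)
    (w : V → ℝ) (hw : IsPotential G w) :
    ∀ x : V, w x ∈ K := by
  obtain ⟨hwN, hwP, hwk⟩ := hw
  set p : Submodule K ℝ := Submodule.span K {(1:ℝ)} with hp
  obtain ⟨q, hq⟩ := Submodule.exists_isCompl p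
  set f : ℝ →ₗ[K] ℝ := p.subtype.comp (p.linearProjOfIsCompl q hq) with hf
  have hsmul : ∀ (a : K) (r : ℝ), a • r = (a : ℝ) * r := fun a r => rfl
  have hfid : ∀ r : ℝ, r ∈ p → f r = r := by
    intro r hr
    have := Submodule.linearProjOfIsCompl_apply_left hq ⟨r, hr⟩
    simp only [hf, LinearMap.comp_apply, Submodule.subtype_apply]
    exact congrArg Subtype.val this
  have hfmem : ∀ r : ℝ, f r ∈ K := by
    intro r
    have h1 : f r ∈ p := (p.linearProjOfIsCompl q hq r).2
    rw [hp, Submodule.mem_span_singleton] at h1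
    obtain ⟨a, ha⟩ := h1
    rw [← ha, hsmul, mul_one]
    exact a.2
  have hmul : ∀ (c : ℝ), c ∈ K → ∀ r : ℝ, f (c * r) = c * f r := by
    intro c hc r
    have := f.map_smul ⟨c, hc⟩ r
    rwa [hsmul, hsmul] at this
  set w' : V → ℝ := fun x => f (w x) with hw'
  have hw'N : w' G.N = 1 := by
    rw [hw']; simp only [hwN]
    exact hfid 1 (Submodule.mem_span_singleton_self _)
  have hw'P : w' G.P = 0 := by rw [hw']; simp only [hwP, map_zero]
  have hw'k : ∀ x : V, x ≠ G.N → x ≠ G.P →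
      (∑ e : E, if G.src e = x ∧ G.tgt e ≠ x then G.weight e * (w' x - w' (G.tgt e)) else 0)
        = 0 := by
    intro x hx1 hx2
    have : ∀ e : E,
        (if G.src e = x ∧ G.tgt e ≠ x then G.weight e * (w' x - w' (G.tgt e)) else 0)
          = f (if G.src e = x ∧ G.tgt e ≠ x then G.weight e * (w x - w (G.tgt e)) else 0) := by
      intro e
      split
      · rw [hmul _ (hK e), map_sub]
      · rw [map_zero]
    rw [Finset.sum_congr rfl (fun e _ => this e), ← map_sum, hwk x hx1 hx2, map_zero]
  set d : V → ℝ := fun x => w x - w' x with hd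
  have hdk : ∀ x : V, x ≠ G.N → x ≠ G.P →
      (∑ e : E, if G.src e = x ∧ G.tgt e ≠ x then G.weight e * (d x - d (G.tgt e)) else 0)
        = 0 := by
    intro x hx1 hx2
    have : ∀ e : E,
        (if G.src e = x ∧ G.tgt e ≠ x then G.weight e * (d x - d (G.tgt e)) else 0)
          = (if G.src e = x ∧ G.tgt e ≠ x then G.weight e * (w x - w (G.tgt e)) else 0)
            - (if G.src e = x ∧ G.tgt e ≠ x then G.weight e * (w' x - w' (G.tgt e)) else 0) := by
      intro e
      split
      · rw [hd]; ring
      · ring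
    rw [Finset.sum_congr rfl (fun e _ => this e), Finset.sum_sub_distrib,
      hwk x hx1 hx2, hw'k x hx1 hx2, sub_zero]
  have hdN : d G.N = 0 := by rw [hd]; simp [hwN, hw'N]
  have hdP : d G.P = 0 := by rw [hd]; simp [hwP, hw'P]
  have h1 := aux_max_le G d hdN hdP hdk
  have h2 := aux_max_le G (fun x => -d x) (by simp [hdN]) (by simp [hdP]) (by
    intro x hx1 hx2
    have : ∀ e : E,
        (if G.src e = x ∧ G.tgt e ≠ x then G.weight e * (-d x - -d (G.tgt e)) else 0)
          = -(if G.src e = x ∧ G.tgt e ≠ x then G.weight e * (d x - d (G.tgt e)) else 0) := by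
      intro e; split <;> ring
    rw [Finset.sum_congr rfl (fun e _ => this e), Finset.sum_neg_distrib,
      hdk x hx1 hx2, neg_zero])
  intro x
  have hdx : d x = 0 := le_antisymm (h1 x) (by have := h2 x; simp at this; linarith)
  have : w x = w' x := by have := hdx; rw [hd] at this; simp at this; linarith
  rw [this, hw']
  exact hfmem (w x)
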